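/- For z_k = 1 - k^{-p} with p > 1 (k ≥ 1), the sequence satisfies the Blaschke condition ∑_{k≥1}(1 - z_k) < ∞, and the associated Blaschke product B satisfies the estimate (1 - z_n²)|B'(z_n)| ≤ exp(-(n+1)/(2^p (p-1))) for all n ≥ 1. -/

import Mathlib

set_option maxHeartbeats 1000000

open scoped ComplexConjugate

/-- The Blaschke product with real zeros `z k = 1 - k^{-p}`, `k ≥ 1`. -/
noncomputable def blaschkeP (p : ℝ) (w : ℂ) : ℂ :=
  ∏' k : ℕ, (((1 - ((k + 1 : ℕ) : ℝ) ^ (-p) : ℝ) : ℂ) - w) /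
    (1 - ((1 - ((k + 1 : ℕ) : ℝ) ^ (-p) : ℝ) : ℂ) * w)

open Real Filter


-- MVT lemma
lemma rpow_telescope_le (p : ℝ) (hp : 1 < p) (k : ℝ) (hk : 1 ≤ k) :
    k ^ (1 - p) - (k + 1) ^ (1 - p) ≤ (p - 1) * k ^ (-p) := by
  have hk0 : (0:ℝ) < k := by linarith
  obtain ⟨c, hc, hceq⟩ := exists_hasDerivAt_eq_slope (fun x => x ^ (1 - p))
      (fun x => (1 - p) * x ^ (-p)) (by linarith : k < k + 1)
      (fun x hx => by
        have : (0:ℝ) < x := lt_of_lt_of_le hk0 hx.1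
        exact ((Real.hasDerivAt_rpow_const (Or.inl this.ne')).congr_deriv
          (by rw [show 1 - p - 1 = -p by ring])).continuousAt.continuousWithinAt)
      (fun x hx => by
        have : (0:ℝ) < x := lt_of_lt_of_le hk0 hx.1.le
        exact (Real.hasDerivAt_rpow_const (Or.inl this.ne')).congr_deriv
          (by rw [show 1 - p - 1 = -p by ring]))
  have hck : k ≤ c := hc.1.le
  have hc0 : (0:ℝ) < c := lt_of_lt_of_le hk0 hck
  have h1 : (1 - p) * c ^ (-p) = ((k+1) ^ (1-p) - k ^ (1-p)) / ((k+1) - k) := hceq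
  have h2 : k ^ (1 - p) - (k + 1) ^ (1 - p) = (p - 1) * c ^ (-p) := by
    field_simp at h1; linarith
  rw [h2]
  have : c ^ (-p) ≤ k ^ (-p) :=
    Real.rpow_le_rpow_of_nonpos hk0 hck (by linarith)
  nlinarith [Real.rpow_nonneg hc0.le (-p)]

-- telescoping hasSum
lemma telescope_hasSum (p : ℝ) (hp : 1 < p) (n : ℕ) :
    HasSum (fun i : ℕ => ((i:ℝ) + n + 1) ^ (1 - p) - ((i:ℝ) + 1 + n + 1) ^ (1 - p))
      (((n:ℝ) + 1) ^ (1 - p)) := by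
  set a : ℕ → ℝ := fun i => ((i:ℝ) + n + 1) ^ (1 - p) with ha
  have hpos : ∀ i : ℕ, (0:ℝ) < (i:ℝ) + n + 1 := by intro i; positivity
  have hmono : ∀ i : ℕ, a (i+1) ≤ a i := by
    intro i
    apply Real.rpow_le_rpow_of_nonpos (hpos i) (by push_cast; linarith) (by linarith)
  have hnn : ∀ i, 0 ≤ a i := fun i => Real.rpow_nonneg (hpos i).le _
  have hterm : ∀ i : ℕ, ((i:ℝ) + n + 1) ^ (1 - p) - ((i:ℝ) + 1 + n + 1) ^ (1 - p)
      = a i - a (i + 1) := by intro i; simp only [ha]; push_cast; ring_nf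
  have hps : ∀ M : ℕ, ∑ i ∈ Finset.range M, (a i - a (i+1)) = a 0 - a M :=
    fun M => Finset.sum_range_sub' a M
  have hsummable : Summable (fun i => a i - a (i+1)) := by
    apply summable_of_sum_range_le (c := a 0) (fun i => by linarith [hmono i])
    intro M; rw [hps M]; linarith [hnn M]
  have htend : Filter.Tendsto (fun M : ℕ => a M) Filter.atTop (nhds 0) := by
    have h1 : Filter.Tendsto (fun M : ℕ => (M:ℝ) + n + 1) Filter.atTop Filter.atTop := by
      apply Filter.tendsto_atTop_add_const_right
      apply Filter.tendsto_atTop_add_const_right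
      exact tendsto_natCast_atTop_atTop
    have h2 := (tendsto_rpow_neg_atTop (by linarith : (0:ℝ) < p - 1)).comp h1
    simpa [ha, show -(p-1) = 1 - p by ring, Function.comp_def] using h2
  have hlim : Filter.Tendsto (fun M => ∑ i ∈ Finset.range M, (a i - a (i+1)))
      Filter.atTop (nhds (a 0)) := by
    simp only [hps]
    simpa using Filter.Tendsto.const_sub (a 0) htend
  have hs := hsummable.hasSum
  have := hs.tendsto_sum_nat
  have heq : (∑' i, (a i - a (i+1))) = a 0 := tendsto_nhds_unique this hlim
  have : HasSum (fun i => a i - a (i+1)) (a 0) := heq ▸ hs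
  have h0 : a 0 = ((n:ℝ) + 1) ^ (1 - p) := by simp [ha]
  rw [← h0]
  exact this.congr_fun fun i => hterm i


lemma theta_eq (p : ℝ) (n i : ℕ) (hn : 1 ≤ n) :
    ((n:ℝ) / ((i:ℝ) + n + 1)) ^ p = (n:ℝ) ^ p * ((i:ℝ) + n + 1) ^ (-p) := by
  have h1 : (0:ℝ) < (i:ℝ) + n + 1 := by positivity
  rw [Real.div_rpow (by positivity) h1.le, Real.rpow_neg h1.le, div_eq_mul_inv]

lemma theta_summable (p : ℝ) (hp : 1 < p) (n : ℕ) (hn : 1 ≤ n) :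
    Summable (fun i : ℕ => ((n:ℝ) / ((i:ℝ) + n + 1)) ^ p) := by
  have h : Summable (fun i : ℕ => ((i:ℝ) + n + 1) ^ (-p)) := by
    have := (Real.summable_nat_rpow (p := -p)).2 (by linarith)
    have h2 := (summable_nat_add_iff (n + 1)).2 this
    apply h2.congr
    intro i
    congr 1
    push_cast; ring
  exact (h.mul_left _).congr fun i => (theta_eq p n i hn).symm

lemma theta_tsum_ge (p : ℝ) (hp : 1 < p) (n : ℕ) (hn : 1 ≤ n) :
    ((n:ℝ) + 1) / (2 ^ p * (p - 1)) ≤ ∑' i : ℕ, ((n:ℝ) / ((i:ℝ) + n + 1)) ^ p := by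
  have hp1 : (0:ℝ) < p - 1 := by linarith
  have hn1 : (1:ℝ) ≤ (n:ℝ) := by exact_mod_cast hn
  have hnp : (0:ℝ) < (n:ℝ) ^ p := Real.rpow_pos_of_pos (by linarith) p
  -- tsum ≥ (n^p/(p-1)) * (n+1)^(1-p)
  have hts : HasSum (fun i : ℕ => ((n:ℝ)^p / (p-1)) *
      (((i:ℝ) + n + 1) ^ (1 - p) - ((i:ℝ) + 1 + n + 1) ^ (1 - p)))
      (((n:ℝ)^p / (p-1)) * ((n:ℝ) + 1) ^ (1 - p)) :=
    (telescope_hasSum p hp n).mul_left _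
  have hle : ∀ i : ℕ, ((n:ℝ)^p / (p-1)) *
      (((i:ℝ) + n + 1) ^ (1 - p) - ((i:ℝ) + 1 + n + 1) ^ (1 - p)) ≤
      ((n:ℝ) / ((i:ℝ) + n + 1)) ^ p := by
    intro i
    have hk : (1:ℝ) ≤ (i:ℝ) + n + 1 := by
      have : (0:ℝ) ≤ (i:ℝ) + n := by positivity
      linarith
    have h1 := rpow_telescope_le p hp ((i:ℝ) + n + 1) hk
    rw [theta_eq p n i hn]
    rw [div_mul_eq_mul_div, div_le_iff₀ hp1]
    calc (n:ℝ)^p * (((i:ℝ) + n + 1) ^ (1 - p) - ((i:ℝ) + 1 + n + 1) ^ (1 - p))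
        ≤ (n:ℝ)^p * ((p-1) * ((i:ℝ) + n + 1) ^ (-p)) := by
          apply mul_le_mul_of_nonneg_left _ hnp.le
          calc ((i:ℝ) + n + 1) ^ (1 - p) - ((i:ℝ) + 1 + n + 1) ^ (1 - p)
              = ((i:ℝ) + n + 1) ^ (1 - p) - (((i:ℝ) + n + 1) + 1) ^ (1 - p) := by ring_nf
            _ ≤ (p - 1) * ((i:ℝ) + n + 1) ^ (-p) := h1
      _ = (n:ℝ)^p * ((i:ℝ) + n + 1) ^ (-p) * (p - 1) := by ring
  have hmain := Summable.tsum_le_tsum hle hts.summable (theta_summable p hp n hn)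
  rw [hts.tsum_eq] at hmain
  refine le_trans ?_ hmain
  -- (n+1)/(2^p (p-1)) ≤ (n^p/(p-1)) * (n+1)^(1-p)
  have hnn1 : (0:ℝ) < (n:ℝ) + 1 := by linarith
  have key : ((n:ℝ) + 1) / 2 ^ p ≤ (n:ℝ)^p * ((n:ℝ) + 1) ^ (1 - p) := by
    have e1 : ((n:ℝ) + 1) ^ (1 - p) = ((n:ℝ) + 1) * ((n:ℝ) + 1) ^ (-p) := by
      rw [show (1:ℝ) - p = 1 + -p by ring, Real.rpow_add hnn1, Real.rpow_one]
    have e2 : (n:ℝ)^p * ((n:ℝ) + 1) ^ (-p) = ((n:ℝ) / ((n:ℝ)+1)) ^ p := by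
      rw [Real.div_rpow (by linarith) hnn1.le, Real.rpow_neg hnn1.le, div_eq_mul_inv]
    have e3 : ((1:ℝ)/2) ^ p ≤ ((n:ℝ) / ((n:ℝ)+1)) ^ p := by
      apply Real.rpow_le_rpow (by norm_num) _ (by linarith)
      rw [div_le_div_iff₀ (by norm_num) hnn1]; linarith
    have e4 : ((1:ℝ)/2) ^ p = (2:ℝ)^(-p) := by
      rw [show (1:ℝ)/2 = 2⁻¹ by norm_num, ← Real.rpow_neg_one 2,
        ← Real.rpow_mul (by norm_num)]
      ring_nf
    have h2p : (0:ℝ) < 2 ^ p := Real.rpow_pos_of_pos (by norm_num) p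
    calc ((n:ℝ) + 1) / 2 ^ p = ((n:ℝ) + 1) * (2:ℝ)^(-p) := by
          rw [Real.rpow_neg (by norm_num), div_eq_mul_inv]
      _ ≤ ((n:ℝ) + 1) * ((n:ℝ) / ((n:ℝ)+1)) ^ p := by
          apply mul_le_mul_of_nonneg_left _ hnn1.le
          rw [← e4]; exact e3
      _ = (n:ℝ)^p * ((n:ℝ) + 1) ^ (1 - p) := by rw [e1, ← e2]; ring
  calc ((n:ℝ) + 1) / (2 ^ p * (p - 1)) = (((n:ℝ) + 1) / 2 ^ p) / (p - 1) := by
        rw [div_div]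
    _ ≤ ((n:ℝ)^p * ((n:ℝ) + 1) ^ (1 - p)) / (p - 1) := by
        gcongr
    _ = (n:ℝ)^p / (p - 1) * ((n:ℝ) + 1) ^ (1 - p) := by ring

noncomputable def bz (p : ℝ) (j : ℕ) : ℝ := 1 - ((j + 1 : ℕ) : ℝ) ^ (-p)

noncomputable def bf (p : ℝ) (j : ℕ) (w : ℂ) : ℂ :=
  (((bz p j : ℝ) : ℂ) - w) / (1 - ((bz p j : ℝ) : ℂ) * w)

lemma blaschkeP_eq (p : ℝ) (w : ℂ) : blaschkeP p w = ∏' j : ℕ, bf p j w := rfl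

lemma bz_nonneg (p : ℝ) (hp : 0 < p) (j : ℕ) : 0 ≤ bz p j := by
  have : ((j + 1 : ℕ) : ℝ) ^ (-p) ≤ 1 := by
    apply Real.rpow_le_one_of_one_le_of_nonpos _ (by linarith)
    exact_mod_cast Nat.one_le_iff_ne_zero.2 (Nat.succ_ne_zero j)
  unfold bz; linarith

lemma bz_lt_one (p : ℝ) (j : ℕ) : bz p j < 1 := by
  have : (0:ℝ) < ((j + 1 : ℕ) : ℝ) ^ (-p) := by
    apply Real.rpow_pos_of_pos; exact_mod_cast Nat.succ_pos j
  unfold bz; linarith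

-- value of bf at a real point
lemma bf_real (p : ℝ) (j : ℕ) (x : ℝ) :
    bf p j ((x : ℝ) : ℂ) = (((bz p j - x) / (1 - bz p j * x) : ℝ) : ℂ) := by
  simp only [bf, Complex.ofReal_div, Complex.ofReal_sub, Complex.ofReal_mul,
    Complex.ofReal_one]

-- |Blaschke factor| ≤ 1 at real points of [0,1)
lemma abs_blaschke_le_one {a x : ℝ} (ha0 : 0 ≤ a) (ha1 : a < 1) (hx0 : 0 ≤ x) (hx1 : x < 1) :
    |(a - x) / (1 - a * x)| ≤ 1 := by
  have hd : 0 < 1 - a * x := by nlinarith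
  rw [abs_div, abs_of_pos hd, div_le_one hd, abs_le]
  constructor <;> nlinarith

-- the key factor bound: for b < a ≤ 1, both pos
lemma blaschke_factor_le_exp {a b : ℝ} (hb : 0 < b) (hba : b < a) (ha1 : a ≤ 1) :
    ((1 - b) - (1 - a)) / (1 - (1 - b) * (1 - a)) ≤ Real.exp (-(b / a)) := by
  have ha : 0 < a := hb.trans hba
  have hd : 0 < 1 - (1 - b) * (1 - a) := by nlinarith
  have e1 : (1 - b) - (1 - a) = a - b := by ring
  have e2 : 1 - (1 - b) * (1 - a) = a + b - a * b := by ring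
  rw [e1, e2]
  have h3 : (a - b) / (a + b - a * b) ≤ (a - b) / a := by
    apply div_le_div_of_nonneg_left (by linarith) ha
    nlinarith
  have h4 : (a - b) / a = 1 - b / a := by field_simp
  have h5 : 1 - b / a ≤ Real.exp (-(b / a)) := by
    have := Real.add_one_le_exp (-(b / a))
    linarith
  calc (a - b) / (a + b - a * b) ≤ (a - b) / a := h3
    _ = 1 - b / a := h4
    _ ≤ Real.exp (-(b / a)) := h5

-- for j ≥ n (so j+1 > n): 0 < bf value and bound by exp(-θ (j-n))
lemma bf_pos_real (p : ℝ) (hp : 1 < p) (n j : ℕ) (hn : 1 ≤ n) (hj : n ≤ j) :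
    0 < (bz p j - (1 - (n:ℝ) ^ (-p))) / (1 - bz p j * (1 - (n:ℝ) ^ (-p))) := by
  have hb : (0:ℝ) < ((j + 1 : ℕ) : ℝ) ^ (-p) :=
    Real.rpow_pos_of_pos (by exact_mod_cast Nat.succ_pos j) _
  have ha : (0:ℝ) < (n:ℝ) ^ (-p) :=
    Real.rpow_pos_of_pos (by exact_mod_cast hn) _
  have hba : ((j + 1 : ℕ) : ℝ) ^ (-p) < (n:ℝ) ^ (-p) := by
    apply Real.rpow_lt_rpow_of_neg (by exact_mod_cast hn) _ (by linarith)
    exact_mod_cast Nat.lt_succ_of_le hj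
  have ha1 : (n:ℝ) ^ (-p) ≤ 1 :=
    Real.rpow_le_one_of_one_le_of_nonpos (by exact_mod_cast hn) (by linarith)
  have hz : bz p j = 1 - ((j + 1 : ℕ) : ℝ) ^ (-p) := rfl
  rw [hz]
  apply div_pos (by linarith) (by nlinarith)

lemma bf_le_exp (p : ℝ) (hp : 1 < p) (n j : ℕ) (hn : 1 ≤ n) (hj : n ≤ j) :
    (bz p j - (1 - (n:ℝ) ^ (-p))) / (1 - bz p j * (1 - (n:ℝ) ^ (-p))) ≤
      Real.exp (-(((n:ℝ) / (((j - n : ℕ):ℝ) + n + 1)) ^ p)) := by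
  have hb : (0:ℝ) < ((j + 1 : ℕ) : ℝ) ^ (-p) :=
    Real.rpow_pos_of_pos (by exact_mod_cast Nat.succ_pos j) _
  have ha : (0:ℝ) < (n:ℝ) ^ (-p) :=
    Real.rpow_pos_of_pos (by exact_mod_cast hn) _
  have hba : ((j + 1 : ℕ) : ℝ) ^ (-p) < (n:ℝ) ^ (-p) := by
    apply Real.rpow_lt_rpow_of_neg (by exact_mod_cast hn) _ (by linarith)
    exact_mod_cast Nat.lt_succ_of_le hj
  have ha1 : (n:ℝ) ^ (-p) ≤ 1 :=
    Real.rpow_le_one_of_one_le_of_nonpos (by exact_mod_cast hn) (by linarith)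
  have hz : bz p j = 1 - ((j + 1 : ℕ) : ℝ) ^ (-p) := rfl
  have key := blaschke_factor_le_exp hb hba ha1
  rw [hz]
  refine le_trans key ?_
  -- now show exp(-(b/a)) = exp(-θ)
  have harg : ((j + 1 : ℕ) : ℝ) ^ (-p) / (n:ℝ) ^ (-p) =
      ((n:ℝ) / (((j - n : ℕ):ℝ) + n + 1)) ^ p := by
    have hjn : ((j - n : ℕ):ℝ) + n + 1 = ((j + 1 : ℕ) : ℝ) := by
      have : (j - n) + n = j := Nat.sub_add_cancel hj
      push_cast [Nat.cast_sub hj]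
      ring
    rw [hjn]
    have hn0 : (0:ℝ) < (n:ℝ) := by exact_mod_cast hn
    have hj0 : (0:ℝ) < ((j + 1 : ℕ) : ℝ) := by exact_mod_cast Nat.succ_pos j
    rw [Real.div_rpow hn0.le hj0.le, Real.rpow_neg hj0.le, Real.rpow_neg hn0.le]
    field_simp
  rw [harg]

lemma main_est (p : ℝ) (hp : 1 < p) (n : ℕ) (hn : 1 ≤ n) :
    (1 - (1 - (n:ℝ)^(-p))^2) * ‖deriv (blaschkeP p) (((1 - (n:ℝ)^(-p) : ℝ)) : ℂ)‖ ≤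
      Real.exp (-((n:ℝ)+1)/(2^p*(p-1))) := by
  have hp0 : (0:ℝ) < p := by linarith
  set x : ℝ := 1 - (n:ℝ)^(-p) with hxdef
  have hnp : (0:ℝ) < (n:ℝ) ^ (-p) := Real.rpow_pos_of_pos (by exact_mod_cast hn) _
  have hnp1 : (n:ℝ) ^ (-p) ≤ 1 :=
    Real.rpow_le_one_of_one_le_of_nonpos (by exact_mod_cast hn) (by linarith)
  have hx0 : 0 ≤ x := by simp only [hxdef]; linarith
  have hx1 : x < 1 := by simp only [hxdef]; linarith
  set r : ℝ := (1 - x)/2 with hrdef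
  have hr : 0 < r := by simp only [hrdef]; linarith
  set D := Metric.closedBall ((x:ℂ)) r with hD
  have hxD : (x:ℂ) ∈ D := Metric.mem_closedBall_self hr.le
  have hDnhds : D ∈ nhds (x:ℂ) := Metric.closedBall_mem_nhds _ hr
  have hwabs : ∀ w ∈ D, ‖w‖ ≤ (1+x)/2 := by
    intro w hw
    have h1 : ‖w - (x:ℂ)‖ ≤ r := by
      simpa [hD, Metric.mem_closedBall, dist_eq_norm] using hw
    have h2 : ‖w‖ ≤ ‖w - (x:ℂ)‖ + ‖(x:ℂ)‖ := by
      simpa using norm_add_le (w - (x:ℂ)) (x:ℂ)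
    have h3 : ‖(x:ℂ)‖ = x := by
      rw [Complex.norm_real, Real.norm_eq_abs, abs_of_nonneg hx0]
    rw [h3] at h2
    simp only [hrdef] at h1; linarith
  have hdenom : ∀ j, ∀ w ∈ D, r ≤ ‖1 - ((bz p j : ℝ):ℂ)*w‖ := by
    intro j w hw
    have h1 : ‖((bz p j : ℝ):ℂ) * w‖ ≤ (1+x)/2 := by
      rw [norm_mul, Complex.norm_real, Real.norm_eq_abs]
      calc |bz p j| * ‖w‖ ≤ 1 * ((1+x)/2) := by
            rw [abs_of_nonneg (bz_nonneg p hp0 j)]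
            exact mul_le_mul (bz_lt_one p j).le (hwabs w hw) (norm_nonneg w) zero_le_one
        _ = (1+x)/2 := one_mul _
    have h2 : ‖(1:ℂ)‖ - ‖((bz p j : ℝ):ℂ) * w‖ ≤ ‖1 - ((bz p j : ℝ):ℂ)*w‖ :=
      norm_sub_norm_le _ _
    rw [norm_one] at h2
    simp only [hrdef]; linarith
  have hdenom0 : ∀ j, ∀ w ∈ D, (1 - ((bz p j : ℝ):ℂ)*w) ≠ 0 := by
    intro j w hw h0
    have := hdenom j w hw
    rw [h0, norm_zero] at this; linarith
  set u : ℕ → ℝ := fun j => ((j + 1 : ℕ) : ℝ) ^ (-p) with hu_def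
  have hu_pos : ∀ j, 0 < u j := fun j =>
    Real.rpow_pos_of_pos (by exact_mod_cast Nat.succ_pos j) _
  have hfm1 : ∀ j, ∀ w ∈ D, ‖bf p j w - 1‖ ≤ (2/r) * u j := by
    intro j w hw
    have hB := hdenom0 j w hw
    have heq : bf p j w - 1 = ((bz p j - 1 : ℝ):ℂ) * (1+w) / (1 - ((bz p j : ℝ):ℂ) * w) := by
      rw [bf]; field_simp; push_cast; ring
    rw [heq, norm_div, norm_mul, Complex.norm_real, Real.norm_eq_abs]
    have h1 : |bz p j - 1| = u j := by
      rw [abs_of_nonpos (by linarith [bz_lt_one p j])]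
      simp only [hu_def, bz]; ring
    have h2 : ‖1 + w‖ ≤ 2 := by
      calc ‖1 + w‖ ≤ ‖(1:ℂ)‖ + ‖w‖ := norm_add_le _ _
        _ ≤ 1 + (1+x)/2 := by rw [norm_one]; linarith [hwabs w hw]
        _ ≤ 2 := by linarith
    rw [h1]
    rw [div_le_iff₀ (lt_of_lt_of_le hr (hdenom j w hw))]
    calc u j * ‖1 + w‖ ≤ u j * 2 := by
          exact mul_le_mul_of_nonneg_left h2 (hu_pos j).le
      _ ≤ 2 / r * u j * ‖1 - ((bz p j : ℝ):ℂ) * w‖ := by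
          rw [div_mul_eq_mul_div, div_mul_eq_mul_div, le_div_iff₀ hr]
          have := hdenom j w hw
          nlinarith [(hu_pos j).le, norm_nonneg (1 - ((bz p j : ℝ):ℂ) * w)]
  have hu_sum : Summable u := by
    have := (Real.summable_nat_rpow (p := -p)).2 (by linarith)
    have h2 := (summable_nat_add_iff 1).2 this
    exact h2.congr fun j => by norm_cast
  -- choose N
  have hulim : Tendsto u atTop (nhds 0) := by
    have h1 : Tendsto (fun j : ℕ => ((j:ℝ)+1)) atTop atTop :=
      tendsto_atTop_add_const_right _ _ tendsto_natCast_atTop_atTop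
    have h2 := (tendsto_rpow_neg_atTop hp0).comp h1
    apply h2.congr
    intro j; simp only [Function.comp, hu_def]; push_cast; ring_nf
  obtain ⟨N, hN⟩ : ∃ N : ℕ, n ≤ N ∧ ∀ j, N ≤ j → (2/r) * u j ≤ 1/2 := by
    have h2 : Tendsto (fun j => (2/r) * u j) atTop (nhds ((2/r) * 0)) := hulim.const_mul _
    rw [mul_zero] at h2
    have h3 : ∀ᶠ j in atTop, (2/r) * u j ≤ 1/2 :=
      h2.eventually (eventually_le_nhds (by norm_num))
    obtain ⟨N₀, hN₀⟩ := eventually_atTop.1 h3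
    exact ⟨max n N₀, le_max_left _ _, fun j hj => hN₀ j ((le_max_right _ _).trans hj)⟩
  obtain ⟨hNn, hNsmall⟩ := hN
  have htail_small : ∀ (j : ℕ), ∀ w ∈ D, ‖bf p (j+N) w - 1‖ ≤ 1/2 := fun j w hw =>
    (hfm1 (j+N) w hw).trans (hNsmall (j+N) (Nat.le_add_left N j))
  have htail_ne : ∀ (j : ℕ), ∀ w ∈ D, bf p (j+N) w ≠ 0 := by
    intro j w hw h0
    have := htail_small j w hw
    rw [h0] at this; norm_num at this
  have hlog_bound : ∀ (j : ℕ), ∀ w ∈ D, ‖Complex.log (bf p (j+N) w)‖ ≤ (3/r) * u (j+N) := by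
    intro j w hw
    have h1 : bf p (j+N) w = 1 + (bf p (j+N) w - 1) := by ring
    calc ‖Complex.log (bf p (j+N) w)‖
        = ‖Complex.log (1 + (bf p (j+N) w - 1))‖ := by rw [← h1]
      _ ≤ (3/2) * ‖bf p (j+N) w - 1‖ :=
          Complex.norm_log_one_add_half_le_self (htail_small j w hw)
      _ ≤ (3/2) * ((2/r) * u (j+N)) := by
          apply mul_le_mul_of_nonneg_left (hfm1 (j+N) w hw) (by norm_num)
      _ = (3/r) * u (j+N) := by field_simp
  have hsumu3 : Summable (fun j => (3/r) * u (j+N)) :=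
    (((summable_nat_add_iff N).2 hu_sum).mul_left _)
  have hlog_summable : ∀ w ∈ D, Summable (fun j => Complex.log (bf p (j+N) w)) := by
    intro w hw
    apply Summable.of_norm_bounded hsumu3 (fun j => hlog_bound j w hw)
  set L : ℂ → ℂ := fun w => ∑' j : ℕ, Complex.log (bf p (j+N) w) with hL_def
  set T : ℂ → ℂ := fun w => Complex.exp (L w) with hT_def
  have hfcont : ∀ j, ContinuousOn (bf p j) D := by
    intro j
    apply ContinuousOn.div
    · exact (continuous_const.sub continuous_id).continuousOn
    · exact (continuous_const.sub (continuous_const.mul continuous_id)).continuousOn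
    · exact hdenom0 j
  have hslit : ∀ (j : ℕ), ∀ w ∈ D, bf p (j+N) w ∈ Complex.slitPlane := by
    intro j w hw
    rw [Complex.mem_slitPlane_iff]
    left
    have h1 : |(bf p (j+N) w - 1).re| ≤ ‖bf p (j+N) w - 1‖ := Complex.abs_re_le_norm _
    have h2 := htail_small j w hw
    have h3 : (bf p (j+N) w).re = 1 + (bf p (j+N) w - 1).re := by
      simp [Complex.sub_re]
    rw [h3]
    have := abs_le.1 (h1.trans h2)
    linarith [this.1]
  have hLcont : ContinuousOn L D := by
    have huc := tendstoUniformlyOn_tsum hsumu3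
      (f := fun (j : ℕ) (w : ℂ) => Complex.log (bf p (j+N) w)) (s := D)
      (fun j w hw => hlog_bound j w hw)
    apply huc.continuousOn
    apply Filter.Eventually.frequently
    filter_upwards with t
    apply continuousOn_finset_sum
    intro j _
    exact (hfcont (j+N)).clog (hslit j)
  have hTcont : ContinuousOn T D := by
    apply Complex.continuous_exp.comp_continuousOn hLcont
  have htail_prod : ∀ w ∈ D, Multipliable (fun j => bf p (j+N) w) ∧
      (∏' j : ℕ, bf p (j+N) w) = T w := by
    intro w hw
    have h1 := Complex.cexp_tsum_eq_tprod (fun j => htail_ne j w hw) (hlog_summable w hw)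
    have h2 := Complex.multipliable_of_summable_log (hlog_summable w hw)
    refine ⟨h2, ?_⟩
    exact h1.symm
  have hsplit : ∀ w ∈ D, blaschkeP p w = (∏ j ∈ Finset.range N, bf p j w) * T w := by
    intro w hw
    obtain ⟨hm, hteq⟩ := htail_prod w hw
    let e : ℕ ≃ ((↑(Finset.range N) : Set ℕ)ᶜ : Set ℕ) :=
      { toFun := fun j => ⟨j + N, by simp⟩
        invFun := fun i => i.1 - N
        left_inv := fun j => by simp
        right_inv := fun i => by
          have h2 : N ≤ i.1 := by
            have := i.2
            simp only [Set.mem_compl_iff, Finset.coe_range, Set.mem_Iio, not_lt] at this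
            omega
          exact Subtype.ext (by simp [Nat.sub_add_cancel h2]) }
    have hecoe : ∀ j : ℕ, ((e j : Set.Elem _) : ℕ) = j + N := fun j => rfl
    have hsc : Multipliable ((fun j => bf p j w) ∘
        ((↑) : ((↑(Finset.range N) : Set ℕ)ᶜ : Set ℕ) → ℕ)) := by
      rw [← e.multipliable_iff]
      apply hm.congr
      intro j
      simp only [Function.comp_apply, hecoe j]
    have htc : (∏' x : ((↑(Finset.range N) : Set ℕ)ᶜ : Set ℕ), bf p (x : ℕ) w) = T w := by
      rw [← hteq, ← e.tprod_eq (fun x : ((↑(Finset.range N) : Set ℕ)ᶜ : Set ℕ) => bf p (x : ℕ) w)]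
      exact tprod_congr fun j => by simp only [hecoe j]
    have hfin : Multipliable ((fun j => bf p j w) ∘ ((↑) : (↑(Finset.range N) : Set ℕ) → ℕ)) :=
      Set.Finite.multipliable (Finset.finite_toSet _) _
    have hcompl := Multipliable.tprod_mul_tprod_compl (f := fun j => bf p j w) hfin hsc
    rw [blaschkeP_eq, ← hcompl]
    exact congrArg₂ (· * ·)
      (Finset.tprod_subtype' (Finset.range N) (fun j => bf p j w)) htc
  set m := n - 1 with hm_def
  have hmn : m + 1 = n := Nat.succ_pred_eq_of_pos hn
  have hmN : m < N := lt_of_lt_of_le (by omega) hNn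
  have hbzm : bz p m = x := by
    simp only [bz, hmn, hxdef]
  have hbzmC : ((bz p m : ℝ):ℂ) = (x:ℂ) := by rw [hbzm]
  set G : ℂ → ℂ := fun w => (∏ j ∈ (Finset.range N).erase m, bf p j w) * T w with hG_def
  have hGcont : ContinuousOn G D := by
    apply ContinuousOn.mul _ hTcont
    apply continuousOn_finset_prod
    intro j _
    exact hfcont j
  have hGx : ContinuousAt G (x:ℂ) := hGcont.continuousAt hDnhds
  have hBG : ∀ w ∈ D, blaschkeP p w = bf p m w * G w := by
    intro w hw
    rw [hsplit w hw, hG_def]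
    rw [← Finset.mul_prod_erase (Finset.range N) _ (Finset.mem_range.2 hmN)]
    ring
  have hx2C : (1 - (x:ℂ)*(x:ℂ)) ≠ 0 := by
    have : (1 - (x:ℂ)*(x:ℂ)) = ((1 - x*x : ℝ):ℂ) := by push_cast; ring
    rw [this, Complex.ofReal_ne_zero]
    nlinarith
  set d : ℂ := -(1 - (x:ℂ)*(x:ℂ))⁻¹ * G (x:ℂ) with hd_def
  have hfm0 : bf p m ((x:ℝ):ℂ) = 0 := by
    rw [bf, hbzmC]; simp
  have hFder : HasDerivAt (fun w => bf p m w * G w) d (x:ℂ) := by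
    rw [hasDerivAt_iff_tendsto_slope]
    have hcont : ContinuousAt (fun w : ℂ => -(1 - (x:ℂ)*w)⁻¹ * G w) (x:ℂ) := by
      have hc1 : ContinuousAt (fun w : ℂ => 1 - (x:ℂ)*w) (x:ℂ) :=
        (continuous_const.sub (continuous_const.mul continuous_id)).continuousAt
      exact ((hc1.inv₀ hx2C).neg).mul hGx
    have hval : (fun w : ℂ => -(1 - (x:ℂ)*w)⁻¹ * G w) (x:ℂ) = d := by
      simp only [hd_def]
    have htend : Tendsto (fun w : ℂ => -(1 - (x:ℂ)*w)⁻¹ * G w) (nhdsWithin (x:ℂ) {(x:ℂ)}ᶜ) (nhds d) := by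
      rw [← hval]
      exact hcont.continuousWithinAt.tendsto
    apply htend.congr'
    have hDmem : D ∈ nhdsWithin (x:ℂ) {(x:ℂ)}ᶜ := nhdsWithin_le_nhds hDnhds
    filter_upwards [hDmem, self_mem_nhdsWithin] with w hwD hwne
    have hwx : w - (x:ℂ) ≠ 0 := sub_ne_zero.2 hwne
    have hden : (1 - (x:ℂ)*w) ≠ 0 := by
      have := hdenom0 m w hwD
      rwa [hbzmC] at this
    rw [slope_def_field]
    rw [hfm0, zero_mul, sub_zero, bf, hbzmC]
    field_simp
    ring
  have hBder : HasDerivAt (blaschkeP p) d (x:ℂ) := by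
    apply hFder.congr_of_eventuallyEq
    filter_upwards [hDnhds] with w hw
    exact hBG w hw
  have hderiv : deriv (blaschkeP p) (x:ℂ) = d := hBder.deriv
  -- now the norm computation
  have hnorm_eq : (1 - x^2) * ‖deriv (blaschkeP p) ((x:ℝ):ℂ)‖ = ‖G ((x:ℝ):ℂ)‖ := by
    rw [hderiv, hd_def, norm_mul, norm_neg, norm_inv]
    have h1 : ‖1 - (x:ℂ)*(x:ℂ)‖ = 1 - x*x := by
      rw [show (1 - (x:ℂ)*(x:ℂ)) = ((1 - x*x : ℝ):ℂ) by push_cast; ring,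
        Complex.norm_real, Real.norm_eq_abs, abs_of_pos (by nlinarith : (0:ℝ) < 1 - x*x)]
    rw [h1]
    have : (0:ℝ) < 1 - x*x := by nlinarith
    have : (1:ℝ) - x^2 ≠ 0 := by nlinarith
    field_simp
  rw [hnorm_eq]
  -- bound ‖G x‖
  set θ : ℕ → ℝ := fun i => ((n:ℝ)/((i:ℝ)+n+1))^p with hθ_def
  have hθ_sum : Summable θ := theta_summable p hp n hn
  have hjN : ∀ j : ℕ, n ≤ j + N := fun j => le_trans hNn (Nat.le_add_left N j)
  have hvpos : ∀ j : ℕ, 0 < (bz p (j+N) - x)/(1 - bz p (j+N) * x) := fun j =>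
    bf_pos_real p hp n (j+N) hn (hjN j)
  have hre_log_tail : ∀ j : ℕ, (Complex.log (bf p (j+N) ((x:ℝ):ℂ))).re ≤ -θ (j + (N - n)) := by
    intro j
    rw [bf_real p (j+N) x, Complex.log_re]
    have h1 : ‖((((bz p (j+N) - x)/(1 - bz p (j+N) * x) : ℝ)):ℂ)‖
        = (bz p (j+N) - x)/(1 - bz p (j+N) * x) := by
      rw [Complex.norm_real, Real.norm_eq_abs, abs_of_pos (hvpos j)]
    rw [h1]
    have h2 := bf_le_exp p hp n (j+N) hn (hjN j)
    have harg : (j + N) - n = j + (N - n) := by omega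
    rw [harg] at h2
    exact (Real.log_le_iff_le_exp (hvpos j)).2 h2
  have hsum_re : Summable (fun j => (Complex.log (bf p (j+N) ((x:ℝ):ℂ))).re) :=
    (Complex.hasSum_re (hlog_summable _ hxD).hasSum).summable
  have hsum_thN : Summable (fun j => -θ (j + (N - n))) :=
    (((summable_nat_add_iff (N-n)).2 hθ_sum).neg)
  have hLre : (L ((x:ℝ):ℂ)).re ≤ -∑' j : ℕ, θ (j + (N-n)) := by
    calc (L ((x:ℝ):ℂ)).re = ∑' j : ℕ, (Complex.log (bf p (j+N) ((x:ℝ):ℂ))).re :=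
          Complex.re_tsum (hlog_summable _ hxD)
      _ ≤ ∑' j : ℕ, -θ (j + (N-n)) := Summable.tsum_le_tsum hre_log_tail hsum_re hsum_thN
      _ = -∑' j : ℕ, θ (j+(N-n)) := by rw [tsum_neg]
  have hTx : ‖T ((x:ℝ):ℂ)‖ ≤ Real.exp (-∑' j : ℕ, θ (j + (N-n))) := by
    rw [hT_def]
    rw [Complex.norm_exp]
    exact Real.exp_le_exp.2 hLre
  -- finite part
  have hdd : ∀ j ∈ (Finset.range N).erase m, ‖bf p j ((x:ℝ):ℂ)‖ ≤
      (if j ≤ m then 1 else Real.exp (-θ (j - n))) := by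
    intro j _
    rw [bf_real p j x, Complex.norm_real, Real.norm_eq_abs]
    by_cases hjm : j ≤ m
    · rw [if_pos hjm]
      exact abs_blaschke_le_one (bz_nonneg p hp0 j) (bz_lt_one p j) hx0 hx1
    · rw [if_neg hjm]
      have hnj : n ≤ j := by omega
      rw [abs_of_pos (bf_pos_real p hp n j hn hnj)]
      exact bf_le_exp p hp n j hn hnj
  have hprod1 : ∏ j ∈ (Finset.range N).erase m, ‖bf p j ((x:ℝ):ℂ)‖ ≤
      ∏ j ∈ (Finset.range N).erase m, (if j ≤ m then 1 else Real.exp (-θ (j - n))) :=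
    Finset.prod_le_prod (fun j _ => norm_nonneg _) hdd
  have hprod2 : ∏ j ∈ (Finset.range N).erase m, (if j ≤ m then 1 else Real.exp (-θ (j - n)))
      = ∏ j ∈ Finset.range N, (if j ≤ m then 1 else Real.exp (-θ (j - n))) :=
    Finset.prod_erase _ (if_pos le_rfl)
  have hprod3 : ∏ j ∈ Finset.range N, (if j ≤ m then 1 else Real.exp (-θ (j - n)))
      = Real.exp (∑ j ∈ Finset.range N, (if j ≤ m then 0 else -θ (j-n))) := by
    rw [Real.exp_sum]
    refine Finset.prod_congr rfl (fun j _ => ?_)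
    by_cases hjm : j ≤ m
    · rw [if_pos hjm, if_pos hjm, Real.exp_zero]
    · rw [if_neg hjm, if_neg hjm]
  have hsum_eq : (∑ j ∈ Finset.range N, (if j ≤ m then 0 else -θ (j-n)))
      = -∑ i ∈ Finset.range (N - n), θ i := by
    conv_lhs => rw [Finset.range_eq_Ico, ← Finset.sum_Ico_consecutive _ (Nat.zero_le n) hNn]
    have h1 : ∑ j ∈ Finset.Ico 0 n, (if j ≤ m then (0:ℝ) else -θ (j-n)) = 0 := by
      apply Finset.sum_eq_zero
      intro j hj
      rw [if_pos]
      have := (Finset.mem_Ico.1 hj).2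
      omega
    have h2 : ∑ j ∈ Finset.Ico n N, (if j ≤ m then (0:ℝ) else -θ (j-n))
        = -∑ i ∈ Finset.range (N-n), θ i := by
      rw [Finset.sum_Ico_eq_sum_range]
      rw [← Finset.sum_neg_distrib]
      refine Finset.sum_congr rfl (fun i _ => ?_)
      rw [if_neg (by omega)]
      have hni : n + i - n = i := by omega
      rw [hni]
    rw [h1, h2, zero_add]
  have hθtailsum : (∑ i ∈ Finset.range (N-n), θ i) + (∑' j : ℕ, θ (j + (N-n))) = ∑' i, θ i :=
    hθ_sum.sum_add_tsum_nat_add (N-n)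
  have hGbound : ‖G ((x:ℝ):ℂ)‖ ≤ Real.exp (-(∑' i, θ i)) := by
    rw [hG_def]
    simp only
    rw [norm_mul, norm_prod]
    calc (∏ j ∈ (Finset.range N).erase m, ‖bf p j ((x:ℝ):ℂ)‖) * ‖T ((x:ℝ):ℂ)‖
        ≤ Real.exp (-∑ i ∈ Finset.range (N-n), θ i) * Real.exp (-∑' j : ℕ, θ (j + (N-n))) := by
          apply mul_le_mul _ hTx (norm_nonneg _) (Real.exp_pos _).le
          calc ∏ j ∈ (Finset.range N).erase m, ‖bf p j ((x:ℝ):ℂ)‖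
              ≤ ∏ j ∈ (Finset.range N).erase m, (if j ≤ m then 1 else Real.exp (-θ (j - n))) :=
              hprod1
            _ = Real.exp (-∑ i ∈ Finset.range (N-n), θ i) := by
              rw [hprod2, hprod3, hsum_eq]
      _ = Real.exp (-(∑' i, θ i)) := by
          rw [← Real.exp_add, ← hθtailsum, neg_add]
  calc ‖G ((x:ℝ):ℂ)‖ ≤ Real.exp (-(∑' i, θ i)) := hGbound
    _ ≤ Real.exp (-((n:ℝ)+1)/(2^p*(p-1))) := by
        rw [Real.exp_le_exp, neg_div]
        exact neg_le_neg (theta_tsum_ge p hp n hn)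



/-- for `z_k = 1 - k^{-p}`, `p > 1`, the Blaschke condition holds
and `(1 - z_n²)|B'(z_n)| ≤ exp(-(n+1)/(2^p (p-1)))` for all `n ≥ 1`. -/
theorem blaschke_derivative_estimate (p : ℝ) (hp : 1 < p)
    (z : ℕ → ℝ) (hz : ∀ k, z k = 1 - (k : ℝ) ^ (-p)) :
    (Summable fun k : ℕ => 1 - z (k + 1)) ∧
    ∀ n : ℕ, 1 ≤ n →
      (1 - z n ^ 2) * ‖deriv (blaschkeP p) ((z n : ℝ) : ℂ)‖ ≤
        Real.exp (-((n : ℝ) + 1) / (2 ^ p * (p - 1))) := by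
  constructor
  · have hsum : Summable (fun k : ℕ => ((k + 1 : ℕ) : ℝ) ^ (-p)) := by
      have h1 := (Real.summable_nat_rpow (p := -p)).2 (by linarith)
      have h2 := (summable_nat_add_iff 1).2 h1
      exact h2.congr fun j => by norm_cast
    apply hsum.congr
    intro k
    rw [hz (k+1)]
    push_cast
    ring
  · intro n hn
    have h := main_est p hp n hn
    rw [hz n]
    exact h
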